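/- arXiv:1607.03664 — 7 statements merged into one kernel-verified Lean document; each statement's English description precedes it below -/
import Mathlib

section
/- The map ĝ(y₁, y₂) = (y₂, (1 + y₂)/(y₁ y₂)) on the positive quadrant of ℝ² has no periodic points of minimal period 2: if ĝ(ĝ(y)) = y then ĝ(y) = y. -/
theorem ghat_no_minimal_period_two
    (g : ℝ × ℝ → ℝ × ℝ) (hg : ∀ p : ℝ × ℝ, g p = (p.2, (1 + p.2) / (p.1 * p.2))) :
    ∀ y₁ y₂ : ℝ, 0 < y₁ → 0 < y₂ →
      g (g (y₁, y₂)) = (y₁, y₂) → g (y₁, y₂) = (y₁, y₂) := by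
  intro y₁ y₂ h1 h2 h
  simp only [hg, Prod.mk.injEq] at h ⊢
  obtain ⟨ha, hb⟩ := h
  have ha' : 1 + y₂ = y₁ ^ 2 * y₂ := by
    field_simp at ha
    nlinarith [ha]
  have hApos : (0:ℝ) < (1 + y₂) / (y₁ * y₂) := by positivity
  rw [ha] at hb
  have hb' : 1 + y₁ = y₁ * y₂ ^ 2 := by
    field_simp at hb
    nlinarith [hb]
  have heq : y₁ = y₂ := by nlinarith [mul_pos h1 h2]
  constructor
  · exact heq.symm
  · subst heq
    field_simp
    nlinarith [ha']
end

section
/- The map h₁(x₃, x₄) = (x₄, √r · x₄²/x₃) on the positive quadrant satisfies, for every n ≥ 1, h₁^[n](x₃, x₄) = (r^{n(n-1)/4} · x₄ⁿ/x₃^{n-1}, r^{n(n-1)/4 + n/2} · x₄^{n+1}/x₃ⁿ). -/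
theorem h1_iterate_formula (r : ℝ) (hr : 0 < r)
    (h₁ : ℝ × ℝ → ℝ × ℝ) (hh₁ : ∀ p : ℝ × ℝ, h₁ p = (p.2, Real.sqrt r * p.2 ^ 2 / p.1)) :
    ∀ x₃ x₄ : ℝ, 0 < x₃ → 0 < x₄ → ∀ n : ℕ, 1 ≤ n →
      h₁^[n] (x₃, x₄) =
        (r ^ ((n : ℝ) * ((n : ℝ) - 1) / 4) * x₄ ^ n / x₃ ^ (n - 1),
         r ^ ((n : ℝ) * ((n : ℝ) - 1) / 4 + (n : ℝ) / 2) * x₄ ^ (n + 1) / x₃ ^ n) := by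
  intro x₃ x₄ hx₃ hx₄ n hn
  induction n, hn using Nat.le_induction with
  | base =>
    simp [hh₁, Real.sqrt_eq_rpow, Real.rpow_natCast]
  | succ n hn ih =>
    rw [Function.iterate_succ_apply', ih, hh₁]
    have hx₃' := hx₃.ne'
    have hrne : ∀ y : ℝ, r ^ y ≠ 0 := fun y => (Real.rpow_pos_of_pos hr y).ne'
    have hcast : ((n - 1 : ℕ) : ℝ) = (n : ℝ) - 1 := by
      have := Nat.cast_sub hn (R := ℝ); push_cast at this ⊢; linarith
    simp only [Prod.mk.injEq, Nat.add_sub_cancel]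
    constructor
    · congr 1
      congr 1
      push_cast
      ring
    · refine Real.log_injOn_pos (Set.mem_Ioi.mpr (by positivity)) (Set.mem_Ioi.mpr (by positivity)) ?_
      rw [Real.sqrt_eq_rpow]
      simp [Real.log_mul, Real.log_div, Real.log_pow, Real.log_rpow hr, Real.log_inv,
        hx₃.ne', hx₄.ne', hrne, pow_ne_zero, mul_ne_zero, div_ne_zero]
      push_cast [hcast]
      ring
end

section
/- The map h₂(x₃, x₄) = (λ x₄²/x₃, λ r x₄³/x₃²) on the positive quadrant satisfies, for every n ≥ 1, h₂^[n](x₃, x₄) = (λⁿ r^{n(n-1)} x₄^{2n}/x₃^{2n-1}, λⁿ r^{n²} x₄^{2n+1}/x₃^{2n}). -/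
theorem h2_iterate_formula (l r : ℝ) (hl : 0 < l) (hr : 0 < r)
    (h₂ : ℝ × ℝ → ℝ × ℝ)
    (hh₂ : ∀ p : ℝ × ℝ, h₂ p = (l * p.2 ^ 2 / p.1, l * r * p.2 ^ 3 / p.1 ^ 2)) :
    ∀ x₃ x₄ : ℝ, 0 < x₃ → 0 < x₄ → ∀ n : ℕ, 1 ≤ n →
      h₂^[n] (x₃, x₄) =
        (l ^ n * r ^ (n * (n - 1)) * x₄ ^ (2 * n) / x₃ ^ (2 * n - 1),
         l ^ n * r ^ (n ^ 2) * x₄ ^ (2 * n + 1) / x₃ ^ (2 * n)) := by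
  intro x₃ x₄ hx₃ hx₄ n hn
  have h3 : (x₃ : ℝ) ≠ 0 := ne_of_gt hx₃
  have key : ∀ m : ℕ, h₂^[m + 1] (x₃, x₄) =
      (l ^ (m + 1) * r ^ ((m + 1) * m) * x₄ ^ (2 * m + 2) / x₃ ^ (2 * m + 1),
       l ^ (m + 1) * r ^ ((m + 1) ^ 2) * x₄ ^ (2 * m + 3) / x₃ ^ (2 * m + 2)) := by
    intro m
    induction m with
    | zero =>
      simp [Function.iterate_one, hh₂]
    | succ k ih =>
      rw [Function.iterate_succ_apply', ih, hh₂]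
      have hA : l ^ (k + 1) * r ^ ((k + 1) * k) * x₄ ^ (2 * k + 2) / x₃ ^ (2 * k + 1) ≠ 0 := by
        positivity
      simp only [Prod.mk.injEq]
      constructor <;>
      · field_simp
        ring
  obtain ⟨m, rfl⟩ : ∃ m, n = m + 1 := ⟨n - 1, by omega⟩
  rw [show m + 1 - 1 = m from rfl, show 2 * (m + 1) - 1 = 2 * m + 1 by omega,
    show 2 * (m + 1) = 2 * m + 2 by omega, show 2 * m + 2 + 1 = 2 * m + 3 by omega, key m]
end

section
/- For ξ > 1, the map f(x, y) = (y, ξ y²/x) on the positive quadrant has no periodic points: there is no point (x, y) with x, y > 0 and positive integer n such that f^[n](x, y) = (x, y). -/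
theorem no_periodic_points_of_one_lt (ξ : ℝ) (hξ : 1 < ξ)
    (f : ℝ × ℝ → ℝ × ℝ) (hf : ∀ p : ℝ × ℝ, f p = (p.2, ξ * p.2 ^ 2 / p.1)) :
    ∀ x y : ℝ, 0 < x → 0 < y → ∀ n : ℕ, 0 < n → f^[n] (x, y) ≠ (x, y) := by
  intro x y hx hy n hn heq
  have hξ0 : (0:ℝ) < ξ := lt_trans one_pos hξ
  have key : ∀ m : ℕ, 0 < (f^[m] (x, y)).1 ∧ 0 < (f^[m] (x, y)).2 ∧
      (f^[m] (x, y)).2 * x = ξ ^ m * y * (f^[m] (x, y)).1 := by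
    intro m
    induction m with
    | zero => simpa using ⟨hx, hy⟩
    | succ k ih =>
      obtain ⟨h1, h2, h3⟩ := ih
      rw [Function.iterate_succ_apply', hf]
      refine ⟨h2, ?_, ?_⟩
      · exact div_pos (mul_pos hξ0 (pow_pos h2 2)) h1
      · simp only
        field_simp
        linear_combination ξ * h3
  obtain ⟨h1, h2, h3⟩ := key n
  rw [heq] at h3
  simp only at h3
  have hξn : 1 < ξ ^ n := one_lt_pow₀ hξ hn.ne'
  nlinarith [mul_pos hx hy]
end

section
/- The map ψ(y₁, y₂, y₃) = (y₂, (1 + y₂)/y₁, y₂(1 + y₂)/y₃) on the positive octant of ℝ³ is globally 10-periodic: ψ^[10] = id. -/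
theorem psi_globally_ten_periodic
    (ψ : ℝ × ℝ × ℝ → ℝ × ℝ × ℝ)
    (hψ : ∀ p : ℝ × ℝ × ℝ, ψ p = (p.2.1, (1 + p.2.1) / p.1, p.2.1 * (1 + p.2.1) / p.2.2)) :
    ∀ y₁ y₂ y₃ : ℝ, 0 < y₁ → 0 < y₂ → 0 < y₃ →
      ψ^[10] (y₁, y₂, y₃) = (y₁, y₂, y₃) := by
  intro a b c ha hb hc
  have ha' : a ≠ 0 := ha.ne'
  have hb' : b ≠ 0 := hb.ne'
  have hc' : c ≠ 0 := hc.ne'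
  have h1 : (1:ℝ) + b ≠ 0 := by positivity
  have h2 : (1:ℝ) + a ≠ 0 := by positivity
  have h3 : (1:ℝ) + a + b ≠ 0 := by positivity
  have e1 : ψ (a, b, c) = (b, (1+b)/a, b*(1+b)/c) := by
    rw [hψ]
  have e2 : ψ (b, (1+b)/a, b*(1+b)/c) = ((1+b)/a, (1+a+b)/(a*b), c*(1+a+b)/(a^2*b)) := by
    rw [hψ]; refine Prod.ext rfl (Prod.ext ?_ ?_) <;> · simp only; try field_simp; try ring
  have e3 : ψ ((1+b)/a, (1+a+b)/(a*b), c*(1+a+b)/(a^2*b)) =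
      ((1+a+b)/(a*b), (1+a)/b, (1+a)*(1+b)/(b*c)) := by
    rw [hψ]; refine Prod.ext rfl (Prod.ext ?_ ?_) <;> · simp only; try field_simp; try ring
  have e4 : ψ ((1+a+b)/(a*b), (1+a)/b, (1+a)*(1+b)/(b*c)) =
      ((1+a)/b, a, c*(1+a+b)/(b*(1+b))) := by
    rw [hψ]; refine Prod.ext rfl (Prod.ext ?_ ?_) <;> · simp only; try field_simp; try ring
  have e5 : ψ ((1+a)/b, a, c*(1+a+b)/(b*(1+b))) =
      (a, b, a*b*(1+a)*(1+b)/(c*(1+a+b))) := by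
    rw [hψ]; refine Prod.ext rfl (Prod.ext ?_ ?_) <;> · simp only; try field_simp; try ring
  have e6 : ψ (a, b, a*b*(1+a)*(1+b)/(c*(1+a+b))) =
      (b, (1+b)/a, c*(1+a+b)/(a*(1+a))) := by
    rw [hψ]; refine Prod.ext rfl (Prod.ext ?_ ?_) <;> · simp only; try field_simp; try ring
  have e7 : ψ (b, (1+b)/a, c*(1+a+b)/(a*(1+a))) =
      ((1+b)/a, (1+a+b)/(a*b), (1+a)*(1+b)/(a*c)) := by
    rw [hψ]; refine Prod.ext rfl (Prod.ext ?_ ?_) <;> · simp only; try field_simp; try ring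
  have e8 : ψ ((1+b)/a, (1+a+b)/(a*b), (1+a)*(1+b)/(a*c)) =
      ((1+a+b)/(a*b), (1+a)/b, c*(1+a+b)/(a*b^2)) := by
    rw [hψ]; refine Prod.ext rfl (Prod.ext ?_ ?_) <;> · simp only; try field_simp; try ring
  have e9 : ψ ((1+a+b)/(a*b), (1+a)/b, c*(1+a+b)/(a*b^2)) =
      ((1+a)/b, a, a*(1+a)/c) := by
    rw [hψ]; refine Prod.ext rfl (Prod.ext ?_ ?_) <;> · simp only; try field_simp; try ring
  have e10 : ψ ((1+a)/b, a, a*(1+a)/c) = (a, b, c) := by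
    rw [hψ]; refine Prod.ext rfl (Prod.ext ?_ ?_) <;> · simp only; try field_simp; try ring
  show ψ (ψ (ψ (ψ (ψ (ψ (ψ (ψ (ψ (ψ (a, b, c)))))))))) = (a, b, c)
  rw [e1, e2, e3, e4, e5, e6, e7, e8, e9, e10]
end

section
/- Let (a, b) be positive reals with (a, b) ≠ (φ, φ), where φ is the golden ratio, and let g(a, b) = ab(a+1)(b+1)/(a+b+1). Then (a, b, √(g(a,b))) is a fixed point of the fifth iterate of the map ψ(y₁, y₂, y₃) = (y₂, (1 + y₂)/y₁, y₂(1 + y₂)/y₃), and it is the unique point of the form (a, b, c) with c > 0 fixed by ψ^[5]. -/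
private lemma psi_key (ψ : ℝ × ℝ × ℝ → ℝ × ℝ × ℝ)
    (hψ : ∀ p : ℝ × ℝ × ℝ, ψ p = (p.2.1, (1 + p.2.1) / p.1, p.2.1 * (1 + p.2.1) / p.2.2))
    (a b c : ℝ) (ha : 0 < a) (hb : 0 < b) (hc : 0 < c) :
    ψ^[5] (a, b, c) = (a, b, a * b * (a + 1) * (b + 1) / ((a + b + 1) * c)) := by
  have ha' := ha.ne'
  have hb' := hb.ne'
  have hc' := hc.ne'
  have h1 : (1:ℝ) + b ≠ 0 := by positivity
  have h2 : (1:ℝ) + a + b ≠ 0 := by positivity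
  have h3 : (1:ℝ) + a ≠ 0 := by positivity
  show ψ (ψ (ψ (ψ (ψ (a,b,c))))) = _
  simp only [hψ]
  simp only [Prod.mk.injEq]
  refine ⟨?_, ?_, ?_⟩ <;> field_simp <;> ring

theorem psi_fifth_iterate_fixed_point
    (ψ : ℝ × ℝ × ℝ → ℝ × ℝ × ℝ)
    (hψ : ∀ p : ℝ × ℝ × ℝ, ψ p = (p.2.1, (1 + p.2.1) / p.1, p.2.1 * (1 + p.2.1) / p.2.2))
    (a b : ℝ) (ha : 0 < a) (hb : 0 < b)
    (hab : (a, b) ≠ ((1 + Real.sqrt 5) / 2, (1 + Real.sqrt 5) / 2))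
    (g : ℝ) (hg : g = a * b * (a + 1) * (b + 1) / (a + b + 1)) :
    ψ^[5] (a, b, Real.sqrt g) = (a, b, Real.sqrt g) ∧
      ∀ c : ℝ, 0 < c → ψ^[5] (a, b, c) = (a, b, c) → c = Real.sqrt g := by
  have hgpos : 0 < g := by rw [hg]; positivity
  have hs : 0 < Real.sqrt g := Real.sqrt_pos.mpr hgpos
  have hden : a + b + 1 ≠ 0 := by positivity
  constructor
  · rw [psi_key ψ hψ a b _ ha hb hs]
    have hnum : a * b * (a + 1) * (b + 1) = g * (a + b + 1) := by
      rw [hg]; field_simp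
    rw [hnum]
    have : g * (a + b + 1) / ((a + b + 1) * Real.sqrt g) = g / Real.sqrt g := by
      rw [mul_comm (a + b + 1), mul_div_mul_right _ _ hden]
    rw [this, Real.div_sqrt]
  · intro c hc hfix
    rw [psi_key ψ hψ a b c ha hb hc] at hfix
    have h3 : a * b * (a + 1) * (b + 1) / ((a + b + 1) * c) = c := congrArg (Prod.snd ∘ Prod.snd) hfix
    have hcsq : c ^ 2 = g := by
      rw [div_eq_iff (by positivity)] at h3
      rw [hg, eq_div_iff hden]
      nlinarith [h3]
    rw [← hcsq, Real.sqrt_sq hc.le]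
end

section
/- Let r be the unique positive root of x³ = 1 + x. If positive reals (x₁, …, x₅) satisfy x₁x₄ = r x₂x₃, x₂x₅ = r x₃x₄ and x₃x₅ = √r · x₄², then the solution of the Somos-5 recurrence x_{n+5} x_n = x_{n+1} x_{n+4} + x_{n+2} x_{n+3} with this initial data satisfies x_{n+5} = r^{(n+2)(n+1)/4} · x₄^{n+2}/x₃^{n+1} for all n ≥ 1. -/
noncomputable def somosF (r a b t : ℝ) : ℝ := r ^ ((t-3)*(t-4)/4) * b ^ (t-3) * a ^ (4-t)

lemma somosF_pos (r a b t : ℝ) (hr : 0 < r) (ha : 0 < a) (hb : 0 < b) :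
    0 < somosF r a b t := by
  unfold somosF
  exact mul_pos (mul_pos (Real.rpow_pos_of_pos hr _) (Real.rpow_pos_of_pos hb _))
    (Real.rpow_pos_of_pos ha _)

lemma somosF_rec (r a b : ℝ) (hr : 0 < r) (hr3 : r ^ 3 = 1 + r) (ha : 0 < a) (hb : 0 < b)
    (t : ℝ) :
    somosF r a b (t+2) * somosF r a b (t+5) + somosF r a b (t+3) * somosF r a b (t+4)
      = somosF r a b (t+6) * somosF r a b (t+1) := by
  have mulF : ∀ p q s p' q' s' : ℝ,
      (r^p * b^q * a^s) * (r^p' * b^q' * a^s') = r^(p+p') * b^(q+q') * a^(s+s') := by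
    intro p q s p' q' s'
    rw [Real.rpow_add hr, Real.rpow_add hb, Real.rpow_add ha]; ring
  simp only [somosF]
  rw [mulF, mulF, mulF]
  set P : ℝ := (t+6-3)*(t+6-4)/4 + (t+1-3)*(t+1-4)/4 with hPdef
  rw [show (t+2-3)*(t+2-4)/4 + (t+5-3)*(t+5-4)/4 = P - 2 by rw [hPdef]; ring]
  rw [show (t+3-3)*(t+3-4)/4 + (t+4-3)*(t+4-4)/4 = P - 3 by rw [hPdef]; ring]
  rw [show (t+2-3) + (t+5-3) = (t+6-3) + (t+1-3) by ring]
  rw [show (t+3-3) + (t+4-3) = (t+6-3) + (t+1-3) by ring]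
  rw [show (4-(t+2)) + (4-(t+5)) = (4-(t+6)) + (4-(t+1)) by ring]
  rw [show (4-(t+3)) + (4-(t+4)) = (4-(t+6)) + (4-(t+1)) by ring]
  have h3' : r ^ (3:ℝ) = 1 + r := by
    rw [show (3:ℝ) = ((3:ℕ):ℝ) by norm_num, Real.rpow_natCast, hr3]
  have hP : r^(P-2) + r^(P-3) = r^P := by
    have e1 : r^(P-2) = r^(P-3) * r^(1:ℝ) := by rw [← Real.rpow_add hr]; congr 1; ring
    have e2 : r^P = r^(P-3) * r^(3:ℝ) := by rw [← Real.rpow_add hr]; congr 1; ring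
    rw [e1, e2, h3', Real.rpow_one]; ring
  rw [← hP]; ring
theorem somos5_singular_solution (r : ℝ) (hr : 0 < r) (hr3 : r ^ 3 = 1 + r)
    (x : ℕ → ℝ) (hpos : ∀ i, 1 ≤ i → i ≤ 5 → 0 < x i)
    (h14 : x 1 * x 4 = r * (x 2 * x 3))
    (h25 : x 2 * x 5 = r * (x 3 * x 4))
    (h35 : x 3 * x 5 = Real.sqrt r * (x 4) ^ 2)
    (hrec : ∀ n : ℕ, 1 ≤ n →
      x (n + 5) * x n = x (n + 1) * x (n + 4) + x (n + 2) * x (n + 3)) :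
    ∀ n : ℕ, 1 ≤ n →
      x (n + 5) = r ^ (((n : ℝ) + 2) * ((n : ℝ) + 1) / 4) * (x 4) ^ (n + 2) / (x 3) ^ (n + 1) := by
  have ha : 0 < x 3 := hpos 3 (by norm_num) (by norm_num)
  have hb : 0 < x 4 := hpos 4 (by norm_num) (by norm_num)
  have h5p : 0 < x 5 := hpos 5 (by norm_num) (by norm_num)
  set a := x 3 with ha3
  set b := x 4 with hb4
  have hsr : (0:ℝ) < Real.sqrt r := Real.sqrt_pos.mpr hr
  have hsq : Real.sqrt r * Real.sqrt r = r := Real.mul_self_sqrt hr.le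
  -- closed forms for initial data
  have hx5 : x 5 = Real.sqrt r * b ^ 2 / a := by
    field_simp
    linear_combination h35
  have hx2 : x 2 = Real.sqrt r * a ^ 2 / b := by
    have h2 : x 2 = r * (a * b) / x 5 := (eq_div_iff (ne_of_gt h5p)).mpr h25
    rw [hx5] at h2
    rw [h2]
    field_simp
    linear_combination (-1) * Real.sq_sqrt hr.le
  have hx1 : x 1 = r * Real.sqrt r * a ^ 3 / b ^ 2 := by
    have h1 : x 1 = r * (x 2 * a) / b := (eq_div_iff (ne_of_gt hb)).mpr h14
    rw [hx2] at h1
    rw [h1]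
    field_simp
  -- rpow forms of initial data
  have h32 : r ^ ((3:ℝ)/2) = r * Real.sqrt r := by
    rw [show (3:ℝ)/2 = 1 + 1/2 by norm_num, Real.rpow_add hr, Real.rpow_one,
      ← Real.sqrt_eq_rpow]
  have h12 : r ^ ((1:ℝ)/2) = Real.sqrt r := (Real.sqrt_eq_rpow r).symm
  have powneg2 : ∀ c : ℝ, 0 < c → c ^ ((-2):ℝ) = (c ^ (2:ℕ))⁻¹ := by
    intro c hc
    rw [show ((-2):ℝ) = -((2:ℕ):ℝ) by norm_num, Real.rpow_neg hc.le, Real.rpow_natCast]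
  have pow2 : ∀ c : ℝ, c ^ ((2:ℝ)) = c ^ (2:ℕ) := by
    intro c; rw [← Real.rpow_natCast c 2]; norm_num
  have pow3 : ∀ c : ℝ, c ^ ((3:ℝ)) = c ^ (3:ℕ) := by
    intro c; rw [← Real.rpow_natCast c 3]; norm_num
  have key : ∀ m : ℕ, 1 ≤ m → x m = somosF r a b (m : ℝ) := by
    intro m
    induction m using Nat.strong_induction_on with
    | _ m ih =>
      intro hm
      rcases le_or_gt m 5 with hm5 | hm6
      · interval_cases m
        · -- m = 1
          show x 1 = somosF r a b ((1:ℕ) : ℝ)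
          unfold somosF
          norm_num
          rw [h32, hx1]
          field_simp
        · show x 2 = somosF r a b ((2:ℕ) : ℝ)
          unfold somosF
          norm_num
          rw [Real.rpow_neg_one, h12, hx2]
          field_simp
        · show x 3 = somosF r a b ((3:ℕ) : ℝ)
          unfold somosF
          norm_num
          rfl
        · show x 4 = somosF r a b ((4:ℕ) : ℝ)
          unfold somosF
          norm_num
          rfl
        · show x 5 = somosF r a b ((5:ℕ) : ℝ)
          unfold somosF
          norm_num
          rw [Real.rpow_neg_one, h12, hx5]
          field_simp
      · obtain ⟨k, rfl⟩ : ∃ k, m = k + 6 := ⟨m - 6, by omega⟩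
        have h1 := ih (k+1) (by omega) (by omega)
        have h2 := ih (k+2) (by omega) (by omega)
        have h3 := ih (k+3) (by omega) (by omega)
        have h4 := ih (k+4) (by omega) (by omega)
        have h5 := ih (k+5) (by omega) (by omega)
        have hrec' := hrec (k+1) (by omega)
        rw [show k+1+5 = k+6 by ring, show k+1+1 = k+2 by ring, show k+1+4 = k+5 by ring,
          show k+1+2 = k+3 by ring, show k+1+3 = k+4 by ring] at hrec'
        rw [h1, h2, h3, h4, h5] at hrec'
        push_cast at hrec' ⊢
        have hid := somosF_rec r a b hr hr3 ha hb (k : ℝ)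
        rw [hid] at hrec'
        have hFpos : 0 < somosF r a b ((k:ℝ) + 1) := somosF_pos r a b _ hr ha hb
        exact mul_right_cancel₀ (ne_of_gt hFpos) hrec'
  intro n hn
  have h := key (n + 5) (by omega)
  push_cast at h
  unfold somosF at h
  rw [h,
    show ((n:ℝ)+5-3)*((n:ℝ)+5-4)/4 = ((n:ℝ)+2)*((n:ℝ)+1)/4 by ring,
    show (n:ℝ)+5-3 = ((n+2:ℕ):ℝ) by push_cast; ring,
    show (4:ℝ)-((n:ℝ)+5) = -(((n+1:ℕ):ℝ)) by push_cast; ring,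
    Real.rpow_natCast, Real.rpow_neg ha.le, Real.rpow_natCast]
  ring
end
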